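/- Let y_te and ŷ_te be square-integrable real random variables and let y = (y_1,…,y_n) and ŷ_cv = ((ŷ_cv)_1,…,(ŷ_cv)_n) be square-integrable random vectors in ℝ^n. Define w_cv = E[(y_te − ŷ_te)²] − (1/n)E[‖y − ŷ_cv‖²]. If (1/n)E[‖y − E y‖²] = Var(y_te), then w_cv = (E ŷ_te − E y_te)² − (1/n)‖E ŷ_cv − E y‖² + Var(ŷ_te) − (1/n)E[‖ŷ_cv − E ŷ_cv‖²] − 2 Cov(ŷ_te, y_te) + (2/n)∑_{k=1}^n Cov((ŷ_cv)_k, y_k). (Paper's Eq. (5), the general decomposition of the CV bias into bias, variance and covariance differences.) -/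

import Mathlib

open MeasureTheory

/-- Variance `E[(U - E U)^2]` of a real random variable. -/
noncomputable def eVar {Ω : Type*} [MeasurableSpace Ω] (μ : Measure Ω) (U : Ω → ℝ) : ℝ :=
  ∫ ω, (U ω - ∫ ω', U ω' ∂μ) ^ 2 ∂μ

/-- Covariance `E[(U - E U)(V - E V)]` of two real random variables. -/
noncomputable def eCov {Ω : Type*} [MeasurableSpace Ω] (μ : Measure Ω) (U V : Ω → ℝ) : ℝ :=
  ∫ ω, (U ω - ∫ ω', U ω' ∂μ) * (V ω - ∫ ω', V ω' ∂μ) ∂μ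

lemma eCov_comm {Ω : Type*} [MeasurableSpace Ω] (μ : Measure Ω) (U V : Ω → ℝ) :
    eCov μ U V = eCov μ V U := by
  unfold eCov; simp_rw [mul_comm]

lemma sq_diff_expand {Ω : Type*} [MeasurableSpace Ω] (μ : Measure Ω) [IsProbabilityMeasure μ]
    (U V : Ω → ℝ) (hU : MemLp U 2 μ) (hV : MemLp V 2 μ) :
    ∫ ω, (U ω - V ω) ^ 2 ∂μ =
      ((∫ ω, V ω ∂μ) - ∫ ω, U ω ∂μ) ^ 2 + eVar μ U + eVar μ V - 2 * eCov μ U V := by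
  set a := ∫ ω, U ω ∂μ with ha
  set b := ∫ ω, V ω ∂μ with hb
  have hU' : MemLp (fun ω => U ω - a) 2 μ := hU.sub (memLp_const a)
  have hV' : MemLp (fun ω => V ω - b) 2 μ := hV.sub (memLp_const b)
  have hx2 : Integrable (fun ω => (U ω - a) ^ 2) μ := hU'.integrable_sq
  have hz2 : Integrable (fun ω => (V ω - b) ^ 2) μ := hV'.integrable_sq
  have hxz : Integrable (fun ω => (U ω - a) * (V ω - b)) μ := by
    have h := (((hU'.add hV').integrable_sq).sub hx2).sub hz2
    have h2 : (fun ω => (U ω - a) * (V ω - b)) =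
        fun ω => ((((U ω - a) + (V ω - b)) ^ 2 - (U ω - a) ^ 2) - (V ω - b) ^ 2) / 2 :=
      funext fun ω => by ring
    rw [h2]
    exact h.div_const 2
  have hx : Integrable (fun ω => U ω - a) μ :=
    (hU.integrable one_le_two).sub (integrable_const a)
  have hz : Integrable (fun ω => V ω - b) μ :=
    (hV.integrable one_le_two).sub (integrable_const b)
  have hmx : ∫ ω, (U ω - a) ∂μ = 0 := by
    rw [integral_sub (hU.integrable one_le_two) (integrable_const a), integral_const]
    simp [ha]
  have hmz : ∫ ω, (V ω - b) ∂μ = 0 := by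
    rw [integral_sub (hV.integrable one_le_two) (integrable_const b), integral_const]
    simp [hb]
  have hpt : (fun ω => (U ω - V ω) ^ 2) =
      fun ω => ((((U ω - a) ^ 2 + (V ω - b) ^ 2 + (b - a) ^ 2)
        - 2 * ((U ω - a) * (V ω - b))) + (2 * (a - b)) * (U ω - a))
        - (2 * (a - b)) * (V ω - b) := funext fun ω => by ring
  have i1 : Integrable (fun ω => (U ω - a) ^ 2 + (V ω - b) ^ 2) μ := hx2.add hz2
  have i2 : Integrable (fun ω => (U ω - a) ^ 2 + (V ω - b) ^ 2 + (b - a) ^ 2) μ :=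
    i1.add (integrable_const _)
  have i3 : Integrable (fun ω => 2 * ((U ω - a) * (V ω - b))) μ := hxz.const_mul 2
  have i4 : Integrable (fun ω => (U ω - a) ^ 2 + (V ω - b) ^ 2 + (b - a) ^ 2
      - 2 * ((U ω - a) * (V ω - b))) μ := i2.sub i3
  have i5 : Integrable (fun ω => 2 * (a - b) * (U ω - a)) μ := hx.const_mul _
  have i6 : Integrable (fun ω => (U ω - a) ^ 2 + (V ω - b) ^ 2 + (b - a) ^ 2
      - 2 * ((U ω - a) * (V ω - b)) + 2 * (a - b) * (U ω - a)) μ := i4.add i5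
  have i7 : Integrable (fun ω => 2 * (a - b) * (V ω - b)) μ := hz.const_mul _
  rw [hpt, integral_sub i6 i7, integral_add i4 i5, integral_sub i2 i3, integral_add i1
      (integrable_const _), integral_add hx2 hz2,
    integral_const_mul, integral_const_mul, integral_const_mul, hmx, hmz, integral_const]
  simp only [measure_univ, ENNReal.toReal_one, probReal_univ, smul_eq_mul, one_mul, mul_zero]
  unfold eVar eCov
  rw [← ha, ← hb]
  ring

/-- **Paper's Eq. (5).** General decomposition of the CV bias
`w_cv = E[(y_te − yhat_te)²] − (1/n)E[‖y − yhat_cv‖²]` into differences of squared biases,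
variances, and response–predictor covariances, under the assumption that the averaged
variance of the training responses equals the variance of the test response. -/
theorem cv_bias_decomposition
    {Ω : Type*} [MeasurableSpace Ω] (μ : Measure Ω) [IsProbabilityMeasure μ]
    (n : ℕ) (hn : 0 < n)
    (yte yhatte : Ω → ℝ) (y yhatcv : Fin n → Ω → ℝ)
    (hyte : MemLp yte 2 μ) (hyhatte : MemLp yhatte 2 μ)
    (hy : ∀ k, MemLp (y k) 2 μ) (hyhatcv : ∀ k, MemLp (yhatcv k) 2 μ)
    (hvar : (1 / (n : ℝ)) * ∫ ω, ∑ k, (y k ω - ∫ ω', y k ω' ∂μ) ^ 2 ∂μ = eVar μ yte) :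
    (∫ ω, (yte ω - yhatte ω) ^ 2 ∂μ) -
        (1 / (n : ℝ)) * ∫ ω, ∑ k, (y k ω - yhatcv k ω) ^ 2 ∂μ =
      ((∫ ω, yhatte ω ∂μ) - ∫ ω, yte ω ∂μ) ^ 2
        - (1 / (n : ℝ)) * ∑ k, ((∫ ω, yhatcv k ω ∂μ) - ∫ ω, y k ω ∂μ) ^ 2
        + eVar μ yhatte
        - (1 / (n : ℝ)) * ∫ ω, ∑ k, (yhatcv k ω - ∫ ω', yhatcv k ω' ∂μ) ^ 2 ∂μ
        - 2 * eCov μ yhatte yte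
        + (2 / (n : ℝ)) * ∑ k, eCov μ (yhatcv k) (y k) := by
  have hsum : ∀ (f g : Fin n → Ω → ℝ), (∀ k, MemLp (f k) 2 μ) → (∀ k, MemLp (g k) 2 μ) →
      ∫ ω, ∑ k, (f k ω - g k ω) ^ 2 ∂μ =
        ∑ k, ∫ ω, (f k ω - g k ω) ^ 2 ∂μ := by
    intro f g hf hg
    exact integral_finset_sum _ fun k _ => ((hf k).sub (hg k)).integrable_sq
  have hsum1 : ∫ ω, ∑ k, (y k ω - yhatcv k ω) ^ 2 ∂μ
      = ∑ k, ∫ ω, (y k ω - yhatcv k ω) ^ 2 ∂μ := hsum y yhatcv hy hyhatcv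
  have hsum2 : ∫ ω, ∑ k, (y k ω - ∫ ω', y k ω' ∂μ) ^ 2 ∂μ
      = ∑ k, eVar μ (y k) := by
    rw [hsum y (fun k _ => ∫ ω', y k ω' ∂μ) hy (fun k => memLp_const _)]
    rfl
  have hsum3 : ∫ ω, ∑ k, (yhatcv k ω - ∫ ω', yhatcv k ω' ∂μ) ^ 2 ∂μ
      = ∑ k, eVar μ (yhatcv k) := by
    rw [hsum yhatcv (fun k _ => ∫ ω', yhatcv k ω' ∂μ) hyhatcv (fun k => memLp_const _)]
    rfl
  rw [hsum2] at hvar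
  rw [sq_diff_expand μ yte yhatte hyte hyhatte, hsum1, hsum3]
  have hk : ∀ k, ∫ ω, (y k ω - yhatcv k ω) ^ 2 ∂μ =
      ((∫ ω, yhatcv k ω ∂μ) - ∫ ω, y k ω ∂μ) ^ 2 + eVar μ (y k) + eVar μ (yhatcv k)
        - 2 * eCov μ (y k) (yhatcv k) :=
    fun k => sq_diff_expand μ (y k) (yhatcv k) (hy k) (hyhatcv k)
  simp_rw [hk, eCov_comm μ yhatte yte]
  rw [Finset.sum_sub_distrib, Finset.sum_add_distrib, Finset.sum_add_distrib,
    ← Finset.mul_sum, ← hvar]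
  simp_rw [eCov_comm μ _ (y _)]
  ring
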